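/- Let $R$ be a rectangle in $\mathbb{R}^2$ of dimensions $1 \times N$ whose longest side is parallel to the unit vector $e = (e_1, e_2)$. If $R$ intersects both the vertical strip $[-1/2, 1/2) \times \mathbb{R}$ and the diagonal segment $\{(x,x) : x \in [i - 1/2, i + 1/2)\}$ for some integer $i \geq 3$, then $|e_1|^{-1} \leq \frac{N}{i - 2}$. -/
import Mathlib


open MeasureTheory Set Real
open scoped ENNReal

noncomputable section

/-- The rectangle with a vertex at `z`, side of length `a` along the unit vector `e`
and side of length `b` along the perpendicular vector `(-e.2, e.1)`. -/
def rectSet (e z : ℝ × ℝ) (a b : ℝ) : Set (ℝ × ℝ) :=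
  (fun p : ℝ × ℝ => (z.1 + p.1 * e.1 - p.2 * e.2, z.2 + p.1 * e.2 + p.2 * e.1)) ''
    (Set.Icc 0 a ×ˢ Set.Icc 0 b)

/-- One-dimensional uncentered Hardy–Littlewood maximal function. -/
def maxHL (f : ℝ → ℝ) (x : ℝ) : ℝ≥0∞ :=
  ⨆ (a : ℝ) (b : ℝ) (_ : a < x) (_ : x < b),
    (ENNReal.ofReal (b - a))⁻¹ * ∫⁻ y in Set.Ioo a b, ENNReal.ofReal |f y|

/-- if a `1 × N` rectangle with long side parallel to the unit vector `e`
meets both the vertical strip `[-1/2, 1/2) × ℝ` and the diagonal segment over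
`[i - 1/2, i + 1/2)` for an integer `i ≥ 3`, then `|e₁|⁻¹ ≤ N / (i - 2)`. -/
theorem statement6 (N : ℕ) (hN : 1 < N) (e z : ℝ × ℝ)
    (he : e.1 ^ 2 + e.2 ^ 2 = 1) (i : ℤ) (hi : 3 ≤ i)
    (hstrip : (rectSet e z N 1 ∩
      (Set.Ico (-(1 / 2) : ℝ) (1 / 2) ×ˢ (Set.univ : Set ℝ))).Nonempty)
    (hdiag : ∃ x : ℝ, x ∈ Set.Ico ((i : ℝ) - 1 / 2) ((i : ℝ) + 1 / 2) ∧
      (x, x) ∈ rectSet e z N 1) :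
    |e.1|⁻¹ ≤ (N : ℝ) / ((i : ℝ) - 2) := by
  obtain ⟨p, hpR, hpS, -⟩ := hstrip
  obtain ⟨x, hx, hxR⟩ := hdiag
  obtain ⟨⟨s1, t1⟩, ⟨hs1, ht1⟩, hp⟩ := hpR
  obtain ⟨⟨s2, t2⟩, ⟨hs2, ht2⟩, hq⟩ := hxR
  simp only [Set.mem_Icc] at hs1 ht1 hs2 ht2
  have hp1 : p.1 = z.1 + s1 * e.1 - t1 * e.2 := (congrArg Prod.fst hp).symm
  have hq1 : x = z.1 + s2 * e.1 - t2 * e.2 := (congrArg Prod.fst hq).symm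
  have he2 : |e.2| ≤ 1 := by nlinarith [sq_abs e.2, abs_nonneg e.2, sq_nonneg e.1]
  have h1 : (s2 - s1) * e.1 ≤ (N : ℝ) * |e.1| := by
    calc (s2 - s1) * e.1 ≤ |(s2 - s1) * e.1| := le_abs_self _
    _ = |s2 - s1| * |e.1| := abs_mul _ _
    _ ≤ (N : ℝ) * |e.1| := by
        apply mul_le_mul_of_nonneg_right _ (abs_nonneg _)
        rw [abs_le]; constructor <;> linarith [hs1.1, hs1.2, hs2.1, hs2.2]
  have h2 : -((t2 - t1) * e.2) ≤ 1 := by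
    calc -((t2 - t1) * e.2) ≤ |(t2 - t1) * e.2| := neg_le_abs _
    _ = |t2 - t1| * |e.2| := abs_mul _ _
    _ ≤ 1 * 1 := by
        apply mul_le_mul _ he2 (abs_nonneg _) zero_le_one
        rw [abs_le]; constructor <;> linarith [ht1.1, ht1.2, ht2.1, ht2.2]
    _ = 1 := one_mul 1
  have hix : (i : ℝ) - 1 / 2 ≤ x := hx.1
  have hps : p.1 < 1 / 2 := hpS.2
  have hkey : (i : ℝ) - 2 ≤ (N : ℝ) * |e.1| := by
    have : x - p.1 = (s2 - s1) * e.1 - (t2 - t1) * e.2 := by rw [hp1, hq1]; ring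
    linarith
  have hi2 : (0 : ℝ) < (i : ℝ) - 2 := by
    have : (3 : ℝ) ≤ (i : ℝ) := by exact_mod_cast hi
    linarith
  have he1 : 0 < |e.1| := by
    rcases (abs_nonneg e.1).lt_or_eq with h | h
    · exact h
    · exfalso; rw [← h, mul_zero] at hkey; linarith
  rw [inv_eq_one_div, div_le_div_iff₀ he1 hi2]
  linarith
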